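/- arXiv:1102.5306 — 2 statements merged into one kernel-verified Lean document; each statement's English description precedes it below -/
import Mathlib

section
/- Let ρ: [0,∞) → [0,1] be increasing, and suppose that for all constants 0 ≤ a < b, and for every sequence ε(n) → 0, the following 'no-jump' property holds for a sequence of random graph processes: the probability that there exist m₁ < m₂ ≤ m₁ + ε(n)·n with L₁(G(m₁)) ≤ a·n and L₁(G(m₂)) ≥ b·n tends to 0. If additionally L₁(G(⌊tn⌋))/n → ρ(t) in probability at every continuity point t of ρ, and ρ(0) = 0 with ρ(t) ≤ Ct near 0, then ρ is continuous on [0,∞). -/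
open MeasureTheory Filter
open scoped ENNReal

/-- The size of the connected component of `G` containing `v`. -/
noncomputable def compSize {n : ℕ} (G : SimpleGraph (Fin n)) (v : Fin n) : ℕ :=
  Set.ncard {u | G.Reachable v u}

/-- The order of the largest connected component of `G`. -/
noncomputable def L1 {n : ℕ} (G : SimpleGraph (Fin n)) : ℕ :=
  Finset.univ.sup (compSize G)

/-- If `ρ : [0,∞) → [0,1]` is increasing with `ρ(0) = 0` and `ρ(t) ≤ Ct` near `0`, the
process satisfies the no-jump property (for all `0 ≤ a < b` and all sequences `ε(n) → 0`,
whp there are no `m₁ < m₂ ≤ m₁ + ε(n)·n` with `L₁(G(m₁)) ≤ a·n` and `L₁(G(m₂)) ≥ b·n`),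
and `L₁(G(⌊tn⌋))/n → ρ(t)` in probability at every continuity point `t` of `ρ`, then `ρ`
is continuous on `[0,∞)`. -/
theorem stmt15
    (Ω : ℕ → Type*) [∀ n, MeasurableSpace (Ω n)]
    (P : ∀ n, Measure (Ω n)) [∀ n, IsProbabilityMeasure (P n)]
    (G : ∀ n : ℕ, Ω n → ℕ → SimpleGraph (Fin n))
    (ρ : ℝ → ℝ) (hmono : MonotoneOn ρ (Set.Ici 0))
    (hmap : ∀ t : ℝ, 0 ≤ t → ρ t ∈ Set.Icc (0 : ℝ) 1)
    (hρ0 : ρ 0 = 0)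
    (hlin : ∃ C : ℝ, ∃ δ > (0:ℝ), ∀ t : ℝ, 0 ≤ t → t < δ → ρ t ≤ C * t)
    (hnojump : ∀ a b : ℝ, 0 ≤ a → a < b → ∀ εseq : ℕ → ℝ,
      Tendsto εseq atTop (nhds 0) →
      Tendsto (fun n => P n
          {ω | ∃ m₁ m₂ : ℕ, m₁ < m₂ ∧ (m₂ : ℝ) ≤ (m₁ : ℝ) + εseq n * n ∧
            (L1 (G n ω m₁) : ℝ) ≤ a * n ∧ b * n ≤ (L1 (G n ω m₂) : ℝ)})
        atTop (nhds 0))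
    (hconv : ∀ t : ℝ, 0 ≤ t → ContinuousWithinAt ρ (Set.Ici 0) t →
      ∀ δ : ℝ, 0 < δ →
      Tendsto (fun n => P n
          {ω | δ < |(L1 (G n ω ⌊t * n⌋₊) : ℝ) / n - ρ t|}) atTop (nhds 0)) :
    ContinuousOn ρ (Set.Ici 0) := by
  classical
  set ρ' : ℝ → ℝ := fun s => ρ (max s 0) with hρ'def
  have hagree : ∀ s : ℝ, 0 ≤ s → ρ' s = ρ s := fun s hs => by
    simp [hρ'def, max_eq_left hs]
  have hm : Monotone ρ' := fun x y hxy =>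
    hmono (le_max_right x 0) (le_max_right y 0) (max_le_max hxy le_rfl)
  -- the key claim : continuity of the extension at every positive point
  have key : ∀ t : ℝ, 0 < t → ContinuousAt ρ' t := by
    intro t ht
    by_contra hdisc
    have hLR : Function.leftLim ρ' t < Function.rightLim ρ' t := by
      rcases lt_or_eq_of_le (hm.leftLim_le_rightLim (le_refl t)) with h' | h'
      · exact h'
      · exact absurd (hm.continuousAt_iff_leftLim_eq_rightLim.2 h') hdisc
    set L := Function.leftLim ρ' t with hLdef
    set R := Function.rightLim ρ' t with hRdef
    have hL0 : 0 ≤ L := by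
      have h0 : ρ' 0 ≤ L := hm.le_leftLim ht
      simpa [hρ'def, hρ0] using h0
    set δ : ℝ := (R - L) / 6 with hδdef
    have hδ : 0 < δ := by rw [hδdef]; linarith
    set a : ℝ := L + 2 * δ with hadef
    set b : ℝ := R - 2 * δ with hbdef
    have ha0 : 0 ≤ a := by rw [hadef]; linarith
    have hab : a < b := by rw [hadef, hbdef, hδdef]; linarith
    -- continuity points on both sides of t
    have hcount : Set.Countable {x | ¬ ContinuousAt ρ' x} := hm.countable_not_continuousAt
    have hdense : Dense {x | ¬ ContinuousAt ρ' x}ᶜ := hcount.dense_compl ℝ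
    have hpick : ∀ k : ℕ, ∃ s₁ s₂ : ℝ, 0 < s₁ ∧ s₁ < t ∧ t < s₂ ∧
        s₂ - s₁ < 2 / ((k : ℝ) + 1) ∧ ContinuousAt ρ' s₁ ∧ ContinuousAt ρ' s₂ := by
      intro k
      have hk1 : (0:ℝ) < 1 / ((k : ℝ) + 1) := by positivity
      have h1 : max (t - 1 / ((k : ℝ) + 1)) (t / 2) < t := by
        apply max_lt <;> linarith
      obtain ⟨s₁, hs₁c, hs₁mem⟩ := hdense.exists_mem_open isOpen_Ioo
        (Set.nonempty_Ioo.2 h1)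
      obtain ⟨s₂, hs₂c, hs₂mem⟩ := hdense.exists_mem_open isOpen_Ioo
        (Set.nonempty_Ioo.2 (by linarith : t < t + 1 / ((k : ℝ) + 1)))
      have h₁l := hs₁mem.1
      have h₁r := hs₁mem.2
      have h₂l := hs₂mem.1
      have h₂r := hs₂mem.2
      have hs₁pos : 0 < s₁ := lt_of_le_of_lt (by linarith [le_max_right (t - 1 / ((k:ℝ)+1)) (t/2)] : (0:ℝ) ≤ max (t - 1 / ((k:ℝ)+1)) (t/2)) h₁l
      have hs₁lb : t - 1 / ((k : ℝ) + 1) < s₁ :=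
        lt_of_le_of_lt (le_max_left _ _) h₁l
      have h2e : 2 / ((k : ℝ) + 1) = 1 / ((k : ℝ) + 1) + 1 / ((k : ℝ) + 1) := by ring
      refine ⟨s₁, s₂, hs₁pos, h₁r, h₂l, by linarith, by simpa using hs₁c, by simpa using hs₂c⟩
    choose s₁ s₂ hs₁pos hs₁t hts₂ hgap hc₁ hc₂ using hpick
    have hgap0 : ∀ k, 0 < s₂ k - s₁ k := fun k => by linarith [hs₁t k, hts₂ k]
    -- continuity within Ici 0 for ρ at the chosen points
    have hcw₁ : ∀ k, ContinuousWithinAt ρ (Set.Ici 0) (s₁ k) := fun k =>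
      ((hc₁ k).continuousWithinAt).congr (fun y hy => (hagree y hy).symm)
        (hagree _ (hs₁pos k).le).symm
    have hcw₂ : ∀ k, ContinuousWithinAt ρ (Set.Ici 0) (s₂ k) := fun k =>
      ((hc₂ k).continuousWithinAt).congr (fun y hy => (hagree y hy).symm)
        (hagree _ (ht.trans (hts₂ k)).le).symm
    -- convergence in probability at the chosen points
    have hb₁ : ∀ k, Tendsto (fun n => P n
        {ω | δ < |(L1 (G n ω ⌊s₁ k * n⌋₊) : ℝ) / n - ρ (s₁ k)|}) atTop (nhds 0) :=
      fun k => hconv (s₁ k) (hs₁pos k).le (hcw₁ k) δ hδ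
    have hb₂ : ∀ k, Tendsto (fun n => P n
        {ω | δ < |(L1 (G n ω ⌊s₂ k * n⌋₊) : ℝ) / n - ρ (s₂ k)|}) atTop (nhds 0) :=
      fun k => hconv (s₂ k) (ht.trans (hts₂ k)).le (hcw₂ k) δ hδ
    have hquarter : (0 : ℝ≥0∞) < ENNReal.ofReal (1/4) :=
      ENNReal.ofReal_pos.2 (by norm_num)
    have hNex : ∀ k : ℕ, ∃ N : ℕ, ∀ n ≥ N,
        P n {ω | δ < |(L1 (G n ω ⌊s₁ k * n⌋₊) : ℝ) / n - ρ (s₁ k)|} < ENNReal.ofReal (1/4) ∧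
        P n {ω | δ < |(L1 (G n ω ⌊s₂ k * n⌋₊) : ℝ) / n - ρ (s₂ k)|} < ENNReal.ofReal (1/4) ∧
        1 ≤ (n : ℝ) ∧ ⌊s₁ k * n⌋₊ < ⌊s₂ k * n⌋₊ := by
      intro k
      have e1 := (hb₁ k).eventually_lt_const hquarter
      have e2 := (hb₂ k).eventually_lt_const hquarter
      have e3 : ∀ᶠ n : ℕ in atTop, 1 ≤ (n : ℝ) := by
        filter_upwards [eventually_ge_atTop 1] with n hn
        exact_mod_cast hn
      have e4 : ∀ᶠ n : ℕ in atTop, ⌊s₁ k * n⌋₊ < ⌊s₂ k * n⌋₊ := by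
        obtain ⟨n₀, hn₀⟩ := exists_nat_gt (1 / (s₂ k - s₁ k))
        filter_upwards [eventually_ge_atTop n₀] with n hn
        have hnn : (1 : ℝ) / (s₂ k - s₁ k) < n := lt_of_lt_of_le hn₀ (by exact_mod_cast hn)
        have hgn : 1 < (s₂ k - s₁ k) * n := by
          rw [div_lt_iff₀ (hgap0 k)] at hnn
          linarith
        have hfl : (⌊s₁ k * n⌋₊ : ℝ) ≤ s₁ k * n :=
          Nat.floor_le (mul_nonneg (hs₁pos k).le (Nat.cast_nonneg n))
        have hfr : s₂ k * n - 1 < (⌊s₂ k * n⌋₊ : ℝ) := Nat.sub_one_lt_floor _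
        have : (⌊s₁ k * n⌋₊ : ℝ) < (⌊s₂ k * n⌋₊ : ℝ) := by nlinarith
        exact_mod_cast this
      exact eventually_atTop.1 (((e1.and e2).and (e3.and e4)).mono
        (fun n h => ⟨h.1.1, h.1.2, h.2.1, h.2.2⟩))
    choose N hN using hNex
    -- a strictly increasing majorant of N
    set M : ℕ → ℕ := fun k => k + (Finset.range (k+1)).sup N with hMdef
    have hMN : ∀ k, N k ≤ M k := fun k =>
      le_add_of_nonneg_of_le (Nat.zero_le _) (Finset.le_sup (Finset.self_mem_range_succ k))
    have hMk : ∀ k, k ≤ M k := fun k => Nat.le_add_right _ _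
    have hMmono : Monotone M := by
      intro i j hij
      exact add_le_add hij (Finset.sup_mono (Finset.range_subset_range.2 (by omega)))
    set idx : ℕ → ℕ := fun n => Nat.findGreatest (fun k => M k ≤ n) n with hidxdef
    have hidx_le : ∀ n, M 0 ≤ n → M (idx n) ≤ n := fun n h0 =>
      Nat.findGreatest_spec (P := fun k => M k ≤ n) (Nat.zero_le n) h0
    have hidx_ge : ∀ k n, M k ≤ n → k ≤ idx n := fun k n h =>
      Nat.le_findGreatest (le_trans (hMk k) h) h
    have hidx_tendsto : Tendsto idx atTop atTop :=
      tendsto_atTop.2 fun k => eventually_atTop.2 ⟨M k, fun n hn => hidx_ge k n hn⟩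
    set εseq : ℕ → ℝ := fun n => (s₂ (idx n) - s₁ (idx n)) + 1 / (n : ℝ) with hεdef
    have hεtend : Tendsto εseq atTop (nhds 0) := by
      have h2k : Tendsto (fun k : ℕ => 2 / ((k : ℝ) + 1)) atTop (nhds 0) := by
        have := tendsto_one_div_add_atTop_nhds_zero_nat (𝕜 := ℝ)
        have h2 := this.const_mul (2 : ℝ)
        simpa [mul_one_div, div_eq_mul_inv] using h2
      have hA : Tendsto (fun n => 2 / ((idx n : ℝ) + 1)) atTop (nhds 0) :=
        h2k.comp hidx_tendsto
      have hB : Tendsto (fun n : ℕ => 1 / (n : ℝ)) atTop (nhds 0) :=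
        tendsto_one_div_atTop_nhds_zero_nat
      have hup : Tendsto (fun n : ℕ => 2 / ((idx n : ℝ) + 1) + 1 / (n : ℝ)) atTop (nhds 0) := by
        simpa using hA.add hB
      refine tendsto_of_tendsto_of_tendsto_of_le_of_le tendsto_const_nhds hup ?_ ?_
      · intro n
        have := hgap0 (idx n)
        have h1n : (0:ℝ) ≤ 1 / (n : ℝ) := by positivity
        simp only [hεdef]
        linarith
      · intro n
        have := hgap (idx n)
        simp only [hεdef]
        linarith
    have Hjump := hnojump a b ha0 hab εseq hεtend
    have hhalf : (0 : ℝ≥0∞) < ENNReal.ofReal (1/2) :=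
      ENNReal.ofReal_pos.2 (by norm_num)
    have hupper := Hjump.eventually_lt_const hhalf
    have hlow : ∀ᶠ n in atTop, ENNReal.ofReal (1/2) ≤ P n
        {ω | ∃ m₁ m₂ : ℕ, m₁ < m₂ ∧ (m₂ : ℝ) ≤ (m₁ : ℝ) + εseq n * n ∧
          (L1 (G n ω m₁) : ℝ) ≤ a * n ∧ b * n ≤ (L1 (G n ω m₂) : ℝ)} := by
      filter_upwards [eventually_ge_atTop (M 0)] with n hn
      set k := idx n with hkdef
      have hMkn : M k ≤ n := hidx_le n hn
      obtain ⟨hP1, hP2, hn1, hfloor⟩ := hN k n (le_trans (hMN k) hMkn)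
      have hnpos : (0:ℝ) < n := by linarith
      set A := {ω : Ω n | δ < |(L1 (G n ω ⌊s₁ k * n⌋₊) : ℝ) / n - ρ (s₁ k)|} with hAdef
      set B := {ω : Ω n | δ < |(L1 (G n ω ⌊s₂ k * n⌋₊) : ℝ) / n - ρ (s₂ k)|} with hBdef
      have hsub : Aᶜ ∩ Bᶜ ⊆ {ω : Ω n | ∃ m₁ m₂ : ℕ, m₁ < m₂ ∧
          (m₂ : ℝ) ≤ (m₁ : ℝ) + εseq n * n ∧
          (L1 (G n ω m₁) : ℝ) ≤ a * n ∧ b * n ≤ (L1 (G n ω m₂) : ℝ)} := by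
        rintro ω ⟨hωA, hωB⟩
        have hA' : |(L1 (G n ω ⌊s₁ k * n⌋₊) : ℝ) / n - ρ (s₁ k)| ≤ δ :=
          not_lt.1 hωA
        have hB' : |(L1 (G n ω ⌊s₂ k * n⌋₊) : ℝ) / n - ρ (s₂ k)| ≤ δ :=
          not_lt.1 hωB
        refine ⟨⌊s₁ k * n⌋₊, ⌊s₂ k * n⌋₊, hfloor, ?_, ?_, ?_⟩
        · have hfl2 : (⌊s₂ k * n⌋₊ : ℝ) ≤ s₂ k * n :=
            Nat.floor_le (mul_nonneg (ht.trans (hts₂ k)).le (Nat.cast_nonneg n))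
          have hfl1 : s₁ k * n < (⌊s₁ k * n⌋₊ : ℝ) + 1 := Nat.lt_floor_add_one _
          have hne : (n : ℝ) ≠ 0 := ne_of_gt hnpos
          have hmul : εseq n * n = (s₂ k - s₁ k) * n + 1 := by
            have he : εseq n = (s₂ k - s₁ k) + 1 / (n : ℝ) := rfl
            rw [he, add_mul, one_div, inv_mul_cancel₀ hne]
          rw [hmul]
          nlinarith
        · -- upper bound at m₁
          have h1 : (L1 (G n ω ⌊s₁ k * n⌋₊) : ℝ) / n ≤ ρ (s₁ k) + δ := by
            have := (abs_le.1 hA').2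
            linarith
          have h2 : ρ (s₁ k) ≤ L := by
            rw [← hagree _ (hs₁pos k).le]
            exact hm.le_leftLim (hs₁t k)
          have h3 : (L1 (G n ω ⌊s₁ k * n⌋₊) : ℝ) / n ≤ a := by
            rw [hadef]; linarith
          calc (L1 (G n ω ⌊s₁ k * n⌋₊) : ℝ)
              = (L1 (G n ω ⌊s₁ k * n⌋₊) : ℝ) / n * n := by field_simp
            _ ≤ a * n := by
                exact mul_le_mul_of_nonneg_right h3 hnpos.le
        · -- lower bound at m₂
          have h1 : ρ (s₂ k) - δ ≤ (L1 (G n ω ⌊s₂ k * n⌋₊) : ℝ) / n := by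
            have := (abs_le.1 hB').1
            linarith
          have h2 : R ≤ ρ (s₂ k) := by
            rw [← hagree _ (ht.trans (hts₂ k)).le]
            exact hm.rightLim_le (hts₂ k)
          have h3 : b ≤ (L1 (G n ω ⌊s₂ k * n⌋₊) : ℝ) / n := by
            rw [hbdef]; linarith
          calc b * n ≤ (L1 (G n ω ⌊s₂ k * n⌋₊) : ℝ) / n * n :=
                mul_le_mul_of_nonneg_right h3 hnpos.le
            _ = (L1 (G n ω ⌊s₂ k * n⌋₊) : ℝ) := by field_simp
      have hcompl : P n ((Aᶜ ∩ Bᶜ)ᶜ) ≤ ENNReal.ofReal (1/2) := by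
        have hAB : (Aᶜ ∩ Bᶜ)ᶜ = A ∪ B := by
          rw [Set.compl_inter, compl_compl, compl_compl]
        rw [hAB]
        calc P n (A ∪ B) ≤ P n A + P n B := measure_union_le _ _
          _ ≤ ENNReal.ofReal (1/4) + ENNReal.ofReal (1/4) := add_le_add hP1.le hP2.le
          _ = ENNReal.ofReal (1/2) := by
              rw [← ENNReal.ofReal_add (by norm_num) (by norm_num)]
              norm_num
      have hone : ENNReal.ofReal (1/2) + ENNReal.ofReal (1/2) ≤
          P n (Aᶜ ∩ Bᶜ) + ENNReal.ofReal (1/2) := by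
        have h1 : ENNReal.ofReal (1/2) + ENNReal.ofReal (1/2) = 1 := by
          rw [← ENNReal.ofReal_add (by norm_num) (by norm_num)]
          norm_num
        rw [h1]
        calc (1 : ℝ≥0∞) = P n Set.univ := (measure_univ).symm
          _ = P n ((Aᶜ ∩ Bᶜ) ∪ (Aᶜ ∩ Bᶜ)ᶜ) := by rw [Set.union_compl_self]
          _ ≤ P n (Aᶜ ∩ Bᶜ) + P n ((Aᶜ ∩ Bᶜ)ᶜ) := measure_union_le _ _
          _ ≤ P n (Aᶜ ∩ Bᶜ) + ENNReal.ofReal (1/2) := add_le_add le_rfl hcompl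
      have hhalfle : ENNReal.ofReal (1/2) ≤ P n (Aᶜ ∩ Bᶜ) :=
        (ENNReal.add_le_add_iff_right ENNReal.ofReal_ne_top).1 hone
      exact le_trans hhalfle (measure_mono hsub)
    obtain ⟨n, hn1, hn2⟩ := (hlow.and hupper).exists
    exact absurd (lt_of_le_of_lt hn1 hn2) (lt_irrefl _)
  -- assemble
  intro x hx
  rcases eq_or_lt_of_le (Set.mem_Ici.1 hx : (0:ℝ) ≤ x) with heq | hpos
  · -- continuity at 0
    subst heq
    obtain ⟨C, δ₀, hδ₀, hC⟩ := hlin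
    have h1 : Tendsto (fun t : ℝ => C * t) (nhdsWithin 0 (Set.Ici 0)) (nhds 0) := by
      have hc : Continuous (fun t : ℝ => C * t) := continuous_const.mul continuous_id
      simpa using (hc.tendsto 0).mono_left nhdsWithin_le_nhds
    have hub : ∀ᶠ t in nhdsWithin (0:ℝ) (Set.Ici 0), ρ t ≤ C * t := by
      filter_upwards [self_mem_nhdsWithin,
        eventually_nhdsWithin_of_eventually_nhds (tendsto_id.eventually_lt_const hδ₀)]
        with t ht hlt
      exact hC t ht hlt
    have hlb : ∀ᶠ t in nhdsWithin (0:ℝ) (Set.Ici 0), 0 ≤ ρ t := by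
      filter_upwards [self_mem_nhdsWithin] with t ht using (hmap t ht).1
    have hT := tendsto_of_tendsto_of_tendsto_of_le_of_le' tendsto_const_nhds h1 hlb hub
    unfold ContinuousWithinAt
    rw [hρ0]
    exact hT
  · exact ((key x hpos).continuousWithinAt).congr (fun y hy => (hagree y hy).symm)
      (hagree _ hpos.le).symm
end

section
/- Let (E_j)_{j≥1} be events adapted to a filtration (F_j) such that on a decreasing sequence of 'not yet done' events D_{j−1} ∈ F_{j−1} we have P(E_j | F_{j−1}) ≥ p, and such that the total number of j ≤ Δ with E_j occurring while D_{j−1} holds is deterministically at most T (after which D fails). If Δ·p ≥ 2(T+1)·2, i.e. Δ ≥ 4(T+1)/p, then P(D_Δ) ≤ exp(−Δp/8), i.e., with probability at least 1 − e^{−Δp/8} the process is 'done' within Δ steps. -/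
open MeasureTheory
open scoped Classical

/-- Abstract form of Lemma 2.1/3.1: `D j` are decreasing 'not yet done' events, `E j` are
'good step' events with conditional probability at least `p` on `D (j−1)`, and
deterministically at most `T` of the steps `j ≤ Δ` can be good while not yet done.
If `Δ ≥ 4(T+1)/p` then `P(D Δ) ≤ exp(−Δp/8)`. -/
theorem stmt17 {Ω : Type*} {m0 : MeasurableSpace Ω} (P : Measure Ω)
    [IsProbabilityMeasure P] (ℱ : Filtration ℕ m0)
    (Δ T : ℕ) (p : ℝ) (hp0 : 0 < p) (hp1 : p ≤ 1)
    (D E : ℕ → Set Ω)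
    (hDmeas : ∀ j, MeasurableSet[ℱ j] (D j))
    (hEmeas : ∀ j, MeasurableSet[ℱ j] (E j))
    (hDdec : ∀ j, D (j + 1) ⊆ D j)
    (hcond : ∀ j, 1 ≤ j → j ≤ Δ → ∀ᵐ ω ∂P, ω ∈ D (j - 1) →
      p ≤ (P[(E j).indicator (fun _ => (1 : ℝ)) | ℱ (j - 1)]) ω)
    (hdet : ∀ ω : Ω,
      ((Finset.Icc 1 Δ).filter (fun j => ω ∈ E j ∧ ω ∈ D (j - 1))).card ≤ T)
    (hΔ : 4 * ((T : ℝ) + 1) ≤ (Δ : ℝ) * p) :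
    P (D Δ) ≤ ENNReal.ofReal (Real.exp (-((Δ : ℝ) * p) / 8)) := by
  classical
  set q : ℝ := 1 - p / 2 with hq
  have hq0 : 0 ≤ q := by rw [hq]; linarith
  -- the multiplicative increments
  set g : ℕ → Ω → ℝ := fun j ω => if ω ∈ E j ∧ ω ∈ D (j - 1) then (1 / 2 : ℝ) else 1
    with hgdef
  have hg_half : ∀ j ω, (1 / 2 : ℝ) ≤ g j ω := by
    intro j ω; by_cases h : ω ∈ E j ∧ ω ∈ D (j - 1) <;> simp [hgdef, h] <;> norm_num
  have hg_nonneg : ∀ j ω, (0 : ℝ) ≤ g j ω := fun j ω => le_trans (by norm_num) (hg_half j ω)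
  have hg_le_one : ∀ j ω, g j ω ≤ 1 := by
    intro j ω; by_cases h : ω ∈ E j ∧ ω ∈ D (j - 1) <;> simp [hgdef, h] <;> norm_num
  have hg_meas : ∀ j n, j ≤ n → j - 1 ≤ n → Measurable[ℱ n] (g j) := by
    intro j n hjn hjn'
    have hs : MeasurableSet[ℱ n] (E j ∩ D (j - 1)) :=
      ((ℱ.mono hjn _ (hEmeas j)).inter (ℱ.mono hjn' _ (hDmeas (j - 1))))
    exact Measurable.ite hs measurable_const measurable_const
  -- the supermartingale-like quantity
  set F : ℕ → Ω → ℝ := fun n => (D n).indicator (fun ω => ∏ j ∈ Finset.Icc 1 n, g j ω)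
    with hFdef
  have hprod_nonneg : ∀ n ω, (0 : ℝ) ≤ ∏ j ∈ Finset.Icc 1 n, g j ω := by
    intro n ω; exact Finset.prod_nonneg fun j _ => hg_nonneg j ω
  have hprod_le_one : ∀ n ω, (∏ j ∈ Finset.Icc 1 n, g j ω) ≤ 1 := by
    intro n ω; exact Finset.prod_le_one (fun j _ => hg_nonneg j ω) (fun j _ => hg_le_one j ω)
  have hF_nonneg : ∀ n ω, (0 : ℝ) ≤ F n ω := by
    intro n ω
    exact Set.indicator_nonneg (fun ω _ => hprod_nonneg n ω) ω
  have hF_le_one : ∀ n ω, F n ω ≤ 1 := by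
    intro n ω
    by_cases h : ω ∈ D n
    · simp only [hFdef, Set.indicator_of_mem h]; exact hprod_le_one n ω
    · simp [hFdef, Set.indicator_of_notMem h]
  have hF_meas : ∀ n, Measurable[ℱ n] (F n) := by
    intro n
    refine Measurable.indicator ?_ (hDmeas n)
    exact Finset.measurable_prod _ fun j hj => by
      rw [Finset.mem_Icc] at hj
      exact hg_meas j n hj.2 (le_trans (Nat.sub_le _ _) hj.2)
  have hF_meas0 : ∀ n, Measurable (F n) := fun n => (hF_meas n).mono (ℱ.le n) le_rfl
  have hboundInt : ∀ (f : Ω → ℝ), Measurable f → (∀ ω, |f ω| ≤ 1) → Integrable f P := by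
    intro f hf hb
    refine Integrable.mono' (integrable_const (1 : ℝ)) hf.aestronglyMeasurable ?_
    exact ae_of_all _ fun ω => by simpa [Real.norm_eq_abs] using hb ω
  have hF_int : ∀ n, Integrable (F n) P := fun n =>
    hboundInt _ (hF_meas0 n) fun ω => abs_le.2 ⟨by linarith [hF_nonneg n ω], hF_le_one n ω⟩
  have hg_meas0 : ∀ j, Measurable (g j) := fun j =>
    (hg_meas j j le_rfl (Nat.sub_le _ _)).mono (ℱ.le j) le_rfl
  have hg_int : ∀ j, Integrable (g j) P := fun j =>
    hboundInt _ (hg_meas0 j) fun ω => abs_le.2 ⟨by linarith [hg_nonneg j ω], hg_le_one j ω⟩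
  have hind : ∀ n, n ≤ Δ → ∫ ω, F n ω ∂P ≤ q ^ n := by
    intro n
    induction n with
    | zero =>
      intro _
      have : ∫ ω, F 0 ω ∂P ≤ ∫ _ω, (1 : ℝ) ∂P :=
        integral_mono (hF_int 0) (integrable_const 1) fun ω => hF_le_one 0 ω
      simpa using this
    | succ n ih =>
      intro hn
      have hnΔ : n ≤ Δ := le_trans (Nat.le_succ n) hn
      -- indicator functions
      set e : Ω → ℝ := (E (n + 1)).indicator (fun _ => (1 : ℝ)) with hedef
      set d : Ω → ℝ := (D n).indicator (fun _ => (1 : ℝ)) with hddef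
      have he_meas : Measurable e := by
        exact Measurable.indicator measurable_const (ℱ.le _ _ (hEmeas (n + 1)))
      have hd_meas : Measurable d := by
        exact Measurable.indicator measurable_const (ℱ.le _ _ (hDmeas n))
      have he_int : Integrable e P := hboundInt _ he_meas fun ω => by
        by_cases h : ω ∈ E (n + 1) <;> simp [hedef, h]
      have hde_int : Integrable (d * e) P := hboundInt _ (hd_meas.mul he_meas) fun ω => by
        by_cases h : ω ∈ D n <;> by_cases h' : ω ∈ E (n + 1) <;>
          simp [hedef, hddef, h, h']
      have hgrw : g (n + 1) = (fun _ => (1 : ℝ)) - (1 / 2 : ℝ) • (d * e) := by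
        funext ω
        by_cases h : ω ∈ E (n + 1) <;> by_cases h' : ω ∈ D n <;>
          simp [hgdef, hedef, hddef, h, h'] <;> norm_num
      have hdSM : StronglyMeasurable[ℱ n] d :=
        (stronglyMeasurable_const.indicator (hDmeas n))
      -- conditional expectation of g (n+1)
      have hce : P[g (n + 1) | ℱ n] =ᵐ[P]
          fun ω => 1 - (1 / 2 : ℝ) * (d ω * (P[e | ℱ n]) ω) := by
        rw [hgrw]
        have h1 : P[(fun _ => (1 : ℝ)) - (1 / 2 : ℝ) • (d * e) | ℱ n] =ᵐ[P]
            P[(fun _ => (1 : ℝ)) | ℱ n] - P[(1 / 2 : ℝ) • (d * e) | ℱ n] :=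
          condExp_sub (integrable_const 1) (hde_int.smul _) _
        have h2 : P[(1 / 2 : ℝ) • (d * e) | ℱ n] =ᵐ[P] (1 / 2 : ℝ) • P[d * e | ℱ n] :=
          condExp_smul _ _ _
        have h3 : P[d * e | ℱ n] =ᵐ[P] d * P[e | ℱ n] :=
          condExp_mul_of_stronglyMeasurable_left hdSM hde_int he_int
        have h4 : P[(fun _ => (1 : ℝ)) | ℱ n] = fun _ => (1 : ℝ) := condExp_const (ℱ.le n) 1
        filter_upwards [h1, h2, h3] with ω hω1 hω2 hω3
        simp only [Pi.sub_apply, Pi.smul_apply, Pi.mul_apply, smul_eq_mul] at hω1 hω2 hω3 ⊢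
        rw [hω1, hω2, hω3, h4]
      -- pointwise ineq F (n+1) ≤ F n * g (n+1)
      have hstep1 : ∀ ω, F (n + 1) ω ≤ F n ω * g (n + 1) ω := by
        intro ω
        by_cases h : ω ∈ D (n + 1)
        · have h' : ω ∈ D n := hDdec n h
          simp only [hFdef, Set.indicator_of_mem h, Set.indicator_of_mem h']
          rw [Finset.prod_Icc_succ_top (Nat.le_add_left 1 n)]
        · simp only [hFdef, Set.indicator_of_notMem h]
          exact mul_nonneg (hF_nonneg n ω) (hg_nonneg _ ω)
      have hFg_int : Integrable (fun ω => F n ω * g (n + 1) ω) P :=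
        hboundInt _ ((hF_meas0 n).mul (hg_meas0 _)) fun ω => by
          rw [abs_mul]
          calc |F n ω| * |g (n + 1) ω| ≤ 1 * 1 := by
                refine mul_le_mul ?_ ?_ (abs_nonneg _) zero_le_one
                · exact abs_le.2 ⟨by linarith [hF_nonneg n ω], hF_le_one n ω⟩
                · exact abs_le.2 ⟨by linarith [hg_nonneg (n+1) ω], hg_le_one (n+1) ω⟩
            _ = 1 := one_mul 1
      have hFnSM : StronglyMeasurable[ℱ n] (F n) := (hF_meas n).stronglyMeasurable
      have hkey : ∫ ω, F n ω * g (n + 1) ω ∂P ≤ q * ∫ ω, F n ω ∂P := by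
        have hpull : P[(fun ω => F n ω * g (n + 1) ω) | ℱ n] =ᵐ[P]
            fun ω => F n ω * (P[g (n + 1) | ℱ n]) ω :=
          condExp_mul_of_stronglyMeasurable_left hFnSM hFg_int (hg_int _)
        have hcnd := hcond (n + 1) (Nat.le_add_left 1 n) hn
        simp only [Nat.add_sub_cancel] at hcnd
        have hae : ∀ᵐ ω ∂P, (P[(fun ω => F n ω * g (n + 1) ω) | ℱ n]) ω ≤ q * F n ω := by
          filter_upwards [hpull, hce, hcnd] with ω h1 h2 h3
          rw [h1, h2]
          by_cases h : ω ∈ D n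
          · have hc : p ≤ (P[e | ℱ n]) ω := h3 h
            have hd1 : d ω = 1 := by simp [hddef, Set.indicator_of_mem h]
            rw [hd1, one_mul, mul_comm q (F n ω)]
            refine mul_le_mul_of_nonneg_left ?_ (hF_nonneg n ω)
            rw [hq]; linarith
          · have hF0 : F n ω = 0 := by simp [hFdef, Set.indicator_of_notMem h]
            rw [hF0, zero_mul, mul_zero]
        calc ∫ ω, F n ω * g (n + 1) ω ∂P
            = ∫ ω, (P[(fun ω => F n ω * g (n + 1) ω) | ℱ n]) ω ∂P :=
              (integral_condExp (ℱ.le n)).symm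
          _ ≤ ∫ ω, q * F n ω ∂P :=
              integral_mono_ae integrable_condExp ((hF_int n).const_mul q) hae
          _ = q * ∫ ω, F n ω ∂P := integral_const_mul q _
      calc ∫ ω, F (n + 1) ω ∂P ≤ ∫ ω, F n ω * g (n + 1) ω ∂P :=
            integral_mono (hF_int _) hFg_int hstep1
        _ ≤ q * ∫ ω, F n ω ∂P := hkey
        _ ≤ q * q ^ n := mul_le_mul_of_nonneg_left (ih hnΔ) hq0
        _ = q ^ (n + 1) := (pow_succ' q n).symm
  -- lower bound for ∫ F Δ
  have hlow : (1 / 2 : ℝ) ^ T * (P (D Δ)).toReal ≤ ∫ ω, F Δ ω ∂P := by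
    have hpt : ∀ ω, (1 / 2 : ℝ) ^ T * (D Δ).indicator (fun _ => (1 : ℝ)) ω ≤ F Δ ω := by
      intro ω
      by_cases h : ω ∈ D Δ
      · simp only [Set.indicator_of_mem h, mul_one, hFdef]
        have : (∏ j ∈ Finset.Icc 1 Δ, g j ω) =
            (1 / 2 : ℝ) ^ ((Finset.Icc 1 Δ).filter (fun j => ω ∈ E j ∧ ω ∈ D (j - 1))).card := by
          rw [hgdef]
          rw [Finset.prod_ite (fun _ => (1 / 2 : ℝ)) (fun _ => (1 : ℝ))]
          simp [Finset.prod_const]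
        rw [this]
        refine pow_le_pow_of_le_one (by norm_num) (by norm_num) (hdet ω)
      · simp [Set.indicator_of_notMem h, hF_nonneg Δ ω]
    have hint1 : Integrable ((D Δ).indicator (fun _ => (1 : ℝ))) P := by
      refine hboundInt _ (Measurable.indicator measurable_const (ℱ.le _ _ (hDmeas Δ))) ?_
      intro ω; by_cases h : ω ∈ D Δ <;> simp [h]
    calc (1 / 2 : ℝ) ^ T * (P (D Δ)).toReal
        = ∫ ω, (1 / 2 : ℝ) ^ T * (D Δ).indicator (fun _ => (1 : ℝ)) ω ∂P := by
          rw [integral_const_mul, integral_indicator_const _ (ℱ.le _ _ (hDmeas Δ))]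
          simp [Measure.real]
      _ ≤ ∫ ω, F Δ ω ∂P := integral_mono (hint1.const_mul _) (hF_int Δ) hpt
  -- combine
  have hqexp : q ^ Δ ≤ Real.exp (-((Δ : ℝ) * p) / 2) := by
    have h1 : q ≤ Real.exp (-(p / 2)) := by
      have := Real.add_one_le_exp (-(p / 2))
      rw [hq]; linarith
    calc q ^ Δ ≤ Real.exp (-(p / 2)) ^ Δ := pow_le_pow_left₀ hq0 h1 Δ
      _ = Real.exp ((Δ : ℝ) * -(p / 2)) := (Real.exp_nat_mul _ Δ).symm
      _ = Real.exp (-((Δ : ℝ) * p) / 2) := by ring_nf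
  have hmain : (P (D Δ)).toReal ≤ Real.exp (-((Δ : ℝ) * p) / 8) := by
    have h1 : (1 / 2 : ℝ) ^ T * (P (D Δ)).toReal ≤ Real.exp (-((Δ : ℝ) * p) / 2) :=
      le_trans hlow (le_trans (hind Δ le_rfl) hqexp)
    have h2 : (P (D Δ)).toReal ≤ (2 : ℝ) ^ T * Real.exp (-((Δ : ℝ) * p) / 2) := by
      have hpow : (2 : ℝ) ^ T * (1 / 2 : ℝ) ^ T = 1 := by
        rw [← mul_pow]; norm_num
      calc (P (D Δ)).toReal = ((2 : ℝ) ^ T * (1 / 2 : ℝ) ^ T) * (P (D Δ)).toReal := by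
            rw [hpow, one_mul]
        _ = (2 : ℝ) ^ T * ((1 / 2 : ℝ) ^ T * (P (D Δ)).toReal) := by ring
        _ ≤ (2 : ℝ) ^ T * Real.exp (-((Δ : ℝ) * p) / 2) :=
            mul_le_mul_of_nonneg_left h1 (by positivity)
    refine le_trans h2 ?_
    have h2T : (2 : ℝ) ^ T = Real.exp ((T : ℝ) * Real.log 2) := by
      rw [Real.exp_nat_mul, Real.exp_log (by norm_num : (0 : ℝ) < 2)]
    rw [h2T, ← Real.exp_add, Real.exp_le_exp]
    have hlog : Real.log 2 ≤ 3 / 2 := by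
      have := Real.log_two_lt_d9
      linarith
    have hT : (T : ℝ) ≤ (Δ : ℝ) * p / 4 := by linarith
    have hTnn : (0 : ℝ) ≤ (T : ℝ) := Nat.cast_nonneg T
    nlinarith [Real.log_nonneg (by norm_num : (1 : ℝ) ≤ 2)]
  calc P (D Δ) = ENNReal.ofReal (P (D Δ)).toReal := (ENNReal.ofReal_toReal (measure_ne_top P _)).symm
    _ ≤ ENNReal.ofReal (Real.exp (-((Δ : ℝ) * p) / 8)) := ENNReal.ofReal_le_ofReal hmain
end
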